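/- arXiv:2404.02306 — 2 statements merged into one kernel-verified Lean document; each statement's English description precedes it below -/
import Mathlib

section
/- Let u, v : [0,∞) → ℝ be nonnegative continuous functions, let h : [0,∞) × [0,∞) → ℝ be a nonnegative continuous function, and let c₁, c₂ ≥ 0 be constants. If for all t ≥ 0 one has u(t) ≤ c₁ + c₂ ∫₀ᵗ [ v(s) u(s) + ∫₀ˢ h(s,r) u(r) dr ] ds, then for all t ≥ 0 one has u(t) ≤ c₁ · exp( c₂ ∫₀ᵗ ( v(s) + ∫₀ˢ h(s,r) dr ) ds ). (Lemma 5.1, a Gronwall-type inequality with an iterated-integral memory term.) -/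
open MeasureTheory intervalIntegral


theorem gronwall_aux (u v : ℝ → ℝ) (h : ℝ → ℝ → ℝ) (c₁ c₂ : ℝ)
    (hu : Continuous u) (hv : Continuous v)
    (hh : Continuous fun p : ℝ × ℝ => h p.1 p.2)
    (hu0 : ∀ t, 0 ≤ u t) (hv0 : ∀ t, 0 ≤ v t) (hh0 : ∀ s r, 0 ≤ h s r)
    (hc₁ : 0 ≤ c₁) (hc₂ : 0 ≤ c₂)
    (hbound : ∀ t, 0 ≤ t →
      u t ≤ c₁ + c₂ * ∫ s in (0 : ℝ)..t, (v s * u s + ∫ r in (0 : ℝ)..s, h s r * u r)) :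
    ∀ t, 0 ≤ t →
      u t ≤ c₁ * Real.exp (c₂ * ∫ s in (0 : ℝ)..t, (v s + ∫ r in (0 : ℝ)..s, h s r)) := by
  have hhur : Continuous fun p : ℝ × ℝ => h p.1 p.2 * u p.2 :=
    hh.mul (hu.comp continuous_snd)
  have hW : Continuous fun s => ∫ r in (0:ℝ)..s, h s r * u r :=
    continuous_parametric_intervalIntegral_of_continuous (f := fun s r => h s r * u r)
      hhur continuous_id
  have hG : Continuous fun s => ∫ r in (0:ℝ)..s, h s r :=
    continuous_parametric_intervalIntegral_of_continuous (f := fun s r => h s r)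
      hh continuous_id
  set ψ : ℝ → ℝ := fun s => v s * u s + ∫ r in (0:ℝ)..s, h s r * u r with hψdef
  set φ : ℝ → ℝ := fun s => v s + ∫ r in (0:ℝ)..s, h s r with hφdef
  have hψc : Continuous ψ := (hv.mul hu).add hW
  have hφc : Continuous φ := hv.add hG
  set f : ℝ → ℝ := fun t => c₁ + c₂ * ∫ s in (0:ℝ)..t, ψ s with hfdef
  set g : ℝ → ℝ := fun t => c₂ * ∫ s in (0:ℝ)..t, φ s with hgdef
  have hf' : ∀ t, HasDerivAt f (c₂ * ψ t) t := fun t =>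
    ((integral_hasDerivAt_right (hψc.intervalIntegrable 0 t)
      hψc.stronglyMeasurable.stronglyMeasurableAtFilter
      hψc.continuousAt).const_mul c₂).const_add c₁
  have hg' : ∀ t, HasDerivAt g (c₂ * φ t) t := fun t =>
    (integral_hasDerivAt_right (hφc.intervalIntegrable 0 t)
      hφc.stronglyMeasurable.stronglyMeasurableAtFilter
      hφc.continuousAt).const_mul c₂
  have hfd : Differentiable ℝ f := fun t => (hf' t).differentiableAt
  have hgd : Differentiable ℝ g := fun t => (hg' t).differentiableAt
  have hfc : Continuous f := hfd.continuous
  -- ψ nonneg on [0, ∞)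
  have hψ0 : ∀ t, 0 ≤ t → 0 ≤ ψ t := by
    intro t ht
    have : 0 ≤ ∫ r in (0:ℝ)..t, h t r * u r :=
      intervalIntegral.integral_nonneg ht (fun r _ => mul_nonneg (hh0 t r) (hu0 r))
    exact add_nonneg (mul_nonneg (hv0 t) (hu0 t)) this
  -- f monotone on Ici 0
  have hfm : MonotoneOn f (Set.Ici 0) := by
    apply monotoneOn_of_deriv_nonneg (convex_Ici 0) hfc.continuousOn
      (fun t _ => (hfd t).differentiableWithinAt)
    intro t ht
    rw [interior_Ici] at ht
    rw [(hf' t).deriv]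
    exact mul_nonneg hc₂ (hψ0 t ht.le)
  -- u ≤ f on Ici 0
  have huf : ∀ t, 0 ≤ t → u t ≤ f t := hbound
  have hf0 : ∀ t, 0 ≤ t → 0 ≤ f t := fun t ht => le_trans (hu0 t) (huf t ht)
  -- key derivative bound : ψ t ≤ φ t * f t for t ≥ 0
  have hkey : ∀ t, 0 ≤ t → ψ t ≤ φ t * f t := by
    intro t ht
    have h1 : v t * u t ≤ v t * f t := mul_le_mul_of_nonneg_left (huf t ht) (hv0 t)
    have h2 : (∫ r in (0:ℝ)..t, h t r * u r) ≤ ∫ r in (0:ℝ)..t, h t r * f t := by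
      apply intervalIntegral.integral_mono_on ht
      · exact ((hh.comp (Continuous.prodMk_right t)).mul hu).intervalIntegrable 0 t
      · exact ((hh.comp (Continuous.prodMk_right t)).mul continuous_const).intervalIntegrable 0 t
      · intro r hr
        have hr0 : 0 ≤ r := hr.1
        have : u r ≤ f t := le_trans (huf r hr0) (hfm (Set.mem_Ici.2 hr0) (Set.mem_Ici.2 ht) hr.2)
        exact mul_le_mul_of_nonneg_left this (hh0 t r)
    have h3 : (∫ r in (0:ℝ)..t, h t r * f t) = (∫ r in (0:ℝ)..t, h t r) * f t := by
      rw [← intervalIntegral.integral_mul_const]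
    calc ψ t ≤ v t * f t + (∫ r in (0:ℝ)..t, h t r) * f t := by
          rw [hψdef]; dsimp only; rw [← h3]; exact add_le_add h1 h2
      _ = φ t * f t := by rw [hφdef]; ring
  -- F = f * exp(-g) is antitone on Ici 0
  set F : ℝ → ℝ := fun t => f t * Real.exp (-g t) with hFdef
  have hF' : ∀ t, HasDerivAt F
      (c₂ * ψ t * Real.exp (-g t) + f t * (Real.exp (-g t) * (-(c₂ * φ t)))) t := by
    intro t
    exact (hf' t).mul (((hg' t).neg).exp)
  have hFa : AntitoneOn F (Set.Ici 0) := by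
    apply antitoneOn_of_deriv_nonpos (convex_Ici 0)
      ((hfc.mul (Real.continuous_exp.comp hgd.continuous.neg)).continuousOn)
      (fun t _ => (hF' t).differentiableAt.differentiableWithinAt)
    intro t ht
    rw [interior_Ici] at ht
    show deriv F t ≤ 0
    rw [(hF' t).deriv]
    have hb : c₂ * ψ t ≤ c₂ * φ t * f t := by
      rw [mul_assoc]
      exact mul_le_mul_of_nonneg_left (hkey t ht.le) hc₂
    have he : (0:ℝ) < Real.exp (-g t) := Real.exp_pos _
    nlinarith [he.le]
  intro t ht
  have hF0 : F t ≤ F 0 := hFa Set.self_mem_Ici (Set.mem_Ici.2 ht) ht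
  have hg0 : g 0 = 0 := by simp [hgdef]
  have hf0' : f 0 = c₁ := by simp [hfdef]
  rw [hFdef] at hF0
  simp only [hg0, hf0', neg_zero, Real.exp_zero, mul_one] at hF0
  have := huf t ht
  have hexp : (0:ℝ) < Real.exp (-g t) := Real.exp_pos _
  have hft : f t ≤ c₁ * Real.exp (g t) := by
    have h1 := mul_le_mul_of_nonneg_right hF0 (Real.exp_pos (g t)).le
    rwa [mul_assoc, ← Real.exp_add, neg_add_cancel, Real.exp_zero, mul_one] at h1
  calc u t ≤ f t := huf t ht
    _ ≤ c₁ * Real.exp (g t) := hft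

/-- Lemma 5.1: a Gronwall-type inequality with an iterated-integral memory term. -/
theorem gronwall_with_memory (u v : ℝ → ℝ) (h : ℝ → ℝ → ℝ) (c₁ c₂ : ℝ)
    (hu_cont : ContinuousOn u (Set.Ici 0)) (hv_cont : ContinuousOn v (Set.Ici 0))
    (hh_cont : ContinuousOn (fun p : ℝ × ℝ => h p.1 p.2) (Set.Ici 0 ×ˢ Set.Ici 0))
    (hu_nonneg : ∀ t, 0 ≤ t → 0 ≤ u t) (hv_nonneg : ∀ t, 0 ≤ t → 0 ≤ v t)
    (hh_nonneg : ∀ s r, 0 ≤ s → 0 ≤ r → 0 ≤ h s r)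
    (hc₁ : 0 ≤ c₁) (hc₂ : 0 ≤ c₂)
    (hbound : ∀ t, 0 ≤ t →
      u t ≤ c₁ + c₂ * ∫ s in (0 : ℝ)..t, (v s * u s + ∫ r in (0 : ℝ)..s, h s r * u r)) :
    ∀ t, 0 ≤ t →
      u t ≤ c₁ * Real.exp (c₂ * ∫ s in (0 : ℝ)..t, (v s + ∫ r in (0 : ℝ)..s, h s r)) := by
  set π : ℝ → ℝ := fun t => max t 0 with hπdef
  have hπc : Continuous π := continuous_id.max continuous_const
  have hπ0 : ∀ t, 0 ≤ π t := fun t => le_max_right t 0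
  have hπeq : ∀ t, 0 ≤ t → π t = t := fun t ht => max_eq_left ht
  set u' : ℝ → ℝ := fun t => u (π t) with hu'def
  set v' : ℝ → ℝ := fun t => v (π t) with hv'def
  set h' : ℝ → ℝ → ℝ := fun s r => h (π s) (π r) with hh'def
  have hu'c : Continuous u' := hu_cont.comp_continuous hπc hπ0
  have hv'c : Continuous v' := hv_cont.comp_continuous hπc hπ0
  have hh'c : Continuous fun p : ℝ × ℝ => h' p.1 p.2 :=
    hh_cont.comp_continuous ((hπc.comp continuous_fst).prodMk (hπc.comp continuous_snd))
      (fun p => ⟨hπ0 p.1, hπ0 p.2⟩)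
  have hu'0 : ∀ t, 0 ≤ u' t := fun t => hu_nonneg _ (hπ0 t)
  have hv'0 : ∀ t, 0 ≤ v' t := fun t => hv_nonneg _ (hπ0 t)
  have hh'0 : ∀ s r, 0 ≤ h' s r := fun s r => hh_nonneg _ _ (hπ0 s) (hπ0 r)
  -- inner integral equalities
  have hinner : ∀ s, 0 ≤ s →
      (∫ r in (0:ℝ)..s, h' s r * u' r) = ∫ r in (0:ℝ)..s, h s r * u r := by
    intro s hs
    apply intervalIntegral.integral_congr
    intro r hr
    rw [Set.uIcc_of_le hs] at hr
    simp only [hh'def, hu'def, hπeq s hs, hπeq r hr.1]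
  have hinner2 : ∀ s, 0 ≤ s →
      (∫ r in (0:ℝ)..s, h' s r) = ∫ r in (0:ℝ)..s, h s r := by
    intro s hs
    apply intervalIntegral.integral_congr
    intro r hr
    rw [Set.uIcc_of_le hs] at hr
    simp only [hh'def, hπeq s hs, hπeq r hr.1]
  have houter : ∀ t, 0 ≤ t →
      (∫ s in (0:ℝ)..t, (v' s * u' s + ∫ r in (0:ℝ)..s, h' s r * u' r))
        = ∫ s in (0:ℝ)..t, (v s * u s + ∫ r in (0:ℝ)..s, h s r * u r) := by
    intro t ht
    apply intervalIntegral.integral_congr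
    intro s hs
    rw [Set.uIcc_of_le ht] at hs
    simp only [hinner s hs.1]
    simp only [hv'def, hu'def, hπeq s hs.1, hinner s hs.1]
  have houter2 : ∀ t, 0 ≤ t →
      (∫ s in (0:ℝ)..t, (v' s + ∫ r in (0:ℝ)..s, h' s r))
        = ∫ s in (0:ℝ)..t, (v s + ∫ r in (0:ℝ)..s, h s r) := by
    intro t ht
    apply intervalIntegral.integral_congr
    intro s hs
    rw [Set.uIcc_of_le ht] at hs
    simp only [hv'def, hπeq s hs.1, hinner2 s hs.1]
  have hbound' : ∀ t, 0 ≤ t →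
      u' t ≤ c₁ + c₂ * ∫ s in (0:ℝ)..t, (v' s * u' s + ∫ r in (0:ℝ)..s, h' s r * u' r) := by
    intro t ht
    rw [houter t ht]
    simp only [hu'def, hπeq t ht]
    exact hbound t ht
  intro t ht
  have := gronwall_aux u' v' h' c₁ c₂ hu'c hv'c hh'c hu'0 hv'0 hh'0 hc₁ hc₂ hbound' t ht
  rw [houter2 t ht] at this
  simpa only [hu'def, hπeq t ht] using this
end

section
/- Let 1 ≤ p < ∞. There exists a constant C > 0, depending only on p and d but independent of ε and of u, with the following property: for every ε ∈ (0,1] and every continuously differentiable function u : ℝ^d → ℝ that is bounded together with its gradient on the thin domain Ω_ε, defining the thin-direction average M_ε u(x̄) = (1/(2ε)) ∫_{−ε}^{ε} u(x̄, ζ) dζ for x̄ ∈ Ω, one has ∫_{Ω_ε} |u(x̄, x_d) − M_ε u(x̄)|^p dx ≤ C^p ε^p ∫_{Ω_ε} |∂u/∂x_d(x)|^p dx. (The Poincaré–Wirtinger inequality (*1) in a thin domain, with constant of order ε.) -/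
open MeasureTheory Set

private lemma key1d {ε p : ℝ} (hε : 0 < ε) (hp : 1 ≤ p) {w D : ℝ → ℝ}
    (hd : ∀ s, HasDerivAt w (D s) s) (hDc : Continuous D) :
    ∫ t in Set.Ioo (-ε) ε, |w t - (1 / (2 * ε)) * ∫ ζ in (-ε)..ε, w ζ| ^ p
      ≤ (2 * ε) ^ p * ∫ s in Set.Ioo (-ε) ε, |D s| ^ p := by
  have hle : (-ε : ℝ) ≤ ε := by linarith
  have h2ε : (0:ℝ) < 2 * ε := by linarith
  have hwc : Continuous w := continuous_iff_continuousAt.2 fun t => (hd t).continuousAt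
  have hvolIoo : (volume (Ioo (-ε) ε)).toReal = 2 * ε := by
    rw [Real.volume_Ioo]
    rw [ENNReal.toReal_ofReal (by linarith)]
    ring
  have hvolIoc : (volume (Ioc (-ε) ε)).toReal = 2 * ε := by
    rw [Real.volume_Ioc]
    rw [ENNReal.toReal_ofReal (by linarith)]
    ring
  set M : ℝ := (1 / (2 * ε)) * ∫ ζ in (-ε)..ε, w ζ with hM
  set K : ℝ := ∫ s in Ioc (-ε) ε, |D s| with hK
  have hMeq : M = (1 / (2 * ε)) * ∫ ζ in Ioo (-ε) ε, w ζ := by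
    rw [hM, intervalIntegral.integral_of_le hle, integral_Ioc_eq_integral_Ioo]
  have hwInt : IntegrableOn w (Ioo (-ε) ε) :=
    (hwc.continuousOn.integrableOn_compact isCompact_Icc).mono_set Ioo_subset_Icc_self
  have hDabsInt : IntegrableOn (fun s => |D s|) (Ioc (-ε) ε) :=
    (hDc.abs.continuousOn.integrableOn_compact isCompact_Icc).mono_set Ioc_subset_Icc_self
  have hDpc : Continuous (fun s => |D s| ^ p) :=
    hDc.abs.rpow_const fun x => Or.inr (by linarith)
  have hDpInt : IntegrableOn (fun s => |D s| ^ p) (Ioc (-ε) ε) :=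
    (hDpc.continuousOn.integrableOn_compact isCompact_Icc).mono_set Ioc_subset_Icc_self
  have hK0 : 0 ≤ K := setIntegral_nonneg measurableSet_Ioc fun s _ => abs_nonneg _
  -- Step 1 : pointwise bound
  have step1 : ∀ t ∈ Icc (-ε) ε, |w t - M| ≤ K := by
    intro t ht
    have h1 : ∀ ζ ∈ Ioo (-ε) ε, |w t - w ζ| ≤ K := by
      intro ζ hζ
      have hftc : w t - w ζ = ∫ s in ζ..t, D s :=
        (intervalIntegral.integral_eq_sub_of_hasDerivAt (fun s _ => hd s)
          (hDc.intervalIntegrable ζ t)).symm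
      rw [hftc]
      calc |∫ s in ζ..t, D s| ≤ ∫ s in Set.uIoc ζ t, |D s| := by
            simpa [Real.norm_eq_abs] using intervalIntegral.norm_integral_le_integral_norm_uIoc
              (f := D) (a := ζ) (b := t)
        _ ≤ K := by
            apply setIntegral_mono_set hDabsInt
            · exact Filter.Eventually.of_forall fun s => abs_nonneg _
            · have hsub : Set.uIoc ζ t ⊆ Ioc (-ε) ε := by
                rw [Set.uIoc_eq_union]
                apply Set.union_subset <;> apply Set.Ioc_subset_Ioc <;>
                  first
                  | exact le_of_lt hζ.1
                  | exact le_of_lt hζ.2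
                  | exact ht.1
                  | exact ht.2
              exact hsub.eventuallyLE
    have h2 : w t - M = (1 / (2 * ε)) * ∫ ζ in Ioo (-ε) ε, (w t - w ζ) := by
      rw [integral_sub (integrableOn_const (C := w t) (by rw [Real.volume_Ioo]; exact ENNReal.ofReal_ne_top)) hwInt,
        setIntegral_const, measureReal_def, hvolIoo, hMeq]
      field_simp
      ring
    have h3 : |w t - M| ≤ (1 / (2 * ε)) * ∫ ζ in Ioo (-ε) ε, |w t - w ζ| := by
      rw [h2, abs_mul, abs_of_pos (by positivity : (0:ℝ) < 1 / (2 * ε))]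
      gcongr
      simpa [Real.norm_eq_abs] using
        norm_integral_le_integral_norm (μ := volume.restrict (Ioo (-ε) ε))
          (f := fun ζ => w t - w ζ)
    refine h3.trans ?_
    have h4 : ∫ ζ in Ioo (-ε) ε, |w t - w ζ| ≤ ∫ _ζ in Ioo (-ε) ε, K := by
      apply setIntegral_mono_on
      · exact ((continuous_const.sub hwc).abs.continuousOn.integrableOn_compact
          isCompact_Icc).mono_set Ioo_subset_Icc_self
      · exact integrableOn_const (by rw [Real.volume_Ioo]; exact ENNReal.ofReal_ne_top)
      · exact measurableSet_Ioo
      · exact h1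
    calc (1 / (2 * ε)) * ∫ ζ in Ioo (-ε) ε, |w t - w ζ|
        ≤ (1 / (2 * ε)) * ∫ _ζ in Ioo (-ε) ε, K :=
          mul_le_mul_of_nonneg_left h4 (by positivity)
      _ = K := by rw [setIntegral_const, measureReal_def, hvolIoo, smul_eq_mul]; field_simp
  -- Step 2 : Jensen
  have step2 : K ^ p ≤ (2 * ε) ^ (p - 1) * ∫ s in Ioc (-ε) ε, |D s| ^ p := by
    set μ₀ : Measure ℝ := volume.restrict (Ioc (-ε) ε) with hμ₀
    have hμ₀univ : μ₀ univ = ENNReal.ofReal (2 * ε) := by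
      rw [hμ₀, Measure.restrict_apply_univ, Real.volume_Ioc]
      congr 1
      ring
    haveI : IsFiniteMeasure μ₀ := ⟨by rw [hμ₀univ]; exact ENNReal.ofReal_lt_top⟩
    haveI : NeZero μ₀ := ⟨by
      intro h
      have := hμ₀univ
      rw [h] at this
      simp only [Measure.coe_zero, Pi.zero_apply] at this
      rw [eq_comm, ENNReal.ofReal_eq_zero] at this
      linarith⟩
    have hcont : ContinuousOn (fun x : ℝ => x ^ p) (Ici 0) := fun x _ =>
      (Real.continuousAt_rpow_const x p (Or.inr (by linarith))).continuousWithinAt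
    have hJ := (convexOn_rpow hp).map_average_le hcont isClosed_Ici
      (Filter.Eventually.of_forall fun s => abs_nonneg (D s)) hDabsInt
      (by exact hDpInt)
    rw [average_eq, average_eq, measureReal_def, ← hμ₀, hμ₀univ, ENNReal.toReal_ofReal (by linarith)] at hJ
    simp only [smul_eq_mul] at hJ
    have hKdef : (2 * ε)⁻¹ * K = (2 * ε)⁻¹ * ∫ s, |D s| ∂μ₀ := rfl
    have hstep : ((2 * ε)⁻¹ * K) ^ p ≤ (2 * ε)⁻¹ * ∫ s in Ioc (-ε) ε, |D s| ^ p := hJ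
    have hKsplit : K = (2 * ε) * ((2 * ε)⁻¹ * K) := by field_simp
    rw [hKsplit, Real.mul_rpow (by positivity) (by positivity)]
    calc (2 * ε) ^ p * ((2 * ε)⁻¹ * K) ^ p
        ≤ (2 * ε) ^ p * ((2 * ε)⁻¹ * ∫ s in Ioc (-ε) ε, |D s| ^ p) := by
          gcongr
      _ = (2 * ε) ^ (p - 1) * ∫ s in Ioc (-ε) ε, |D s| ^ p := by
          rw [Real.rpow_sub h2ε, Real.rpow_one]
          ring
  -- Step 3 : integrate
  have hLInt : IntegrableOn (fun t => |w t - M| ^ p) (Ioo (-ε) ε) :=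
    (((hwc.sub continuous_const).abs.rpow_const fun x => Or.inr (by linarith)).continuousOn.integrableOn_compact
      isCompact_Icc).mono_set Ioo_subset_Icc_self
  calc ∫ t in Ioo (-ε) ε, |w t - M| ^ p
      ≤ ∫ _t in Ioo (-ε) ε, K ^ p := by
        apply setIntegral_mono_on hLInt
          (integrableOn_const (by rw [Real.volume_Ioo]; exact ENNReal.ofReal_ne_top))
          measurableSet_Ioo
        intro t ht
        exact Real.rpow_le_rpow (abs_nonneg _) (step1 t (Ioo_subset_Icc_self ht)) (by linarith)
    _ = (2 * ε) * K ^ p := by rw [setIntegral_const, measureReal_def, hvolIoo, smul_eq_mul]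
    _ ≤ (2 * ε) * ((2 * ε) ^ (p - 1) * ∫ s in Ioc (-ε) ε, |D s| ^ p) := by gcongr
    _ = (2 * ε) ^ p * ∫ s in Ioo (-ε) ε, |D s| ^ p := by
        have hpow : (2 * ε) * (2 * ε) ^ (p - 1) = (2 * ε) ^ p := by
          have h := Real.rpow_add h2ε 1 (p - 1)
          rw [Real.rpow_one] at h
          rw [← h]
          norm_num
        rw [← integral_Ioc_eq_integral_Ioo (f := fun s => |D s| ^ p), ← hpow]
        ring


def thinDomain (n : ℕ) (Ω : Set (EuclideanSpace ℝ (Fin n))) (ε : ℝ) :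
    Set (EuclideanSpace ℝ (Fin (n + 1))) :=
  {x | (WithLp.toLp 2 (fun i : Fin n => x i.castSucc) : EuclideanSpace ℝ (Fin n)) ∈ Ω ∧
    |x (Fin.last n)| < ε}

noncomputable def thinAverage (n : ℕ) (ε : ℝ) (u : EuclideanSpace ℝ (Fin (n + 1)) → ℝ)
    (xb : EuclideanSpace ℝ (Fin n)) : ℝ :=
  (1 / (2 * ε)) * ∫ ζ in (-ε)..ε, u (WithLp.toLp 2 (Fin.snoc xb.ofLp ζ : Fin (n + 1) → ℝ) : EuclideanSpace ℝ (Fin (n + 1)))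

section Aux

variable {n : ℕ}

noncomputable def snocMap (n : ℕ) (q : EuclideanSpace ℝ (Fin n) × ℝ) :
    EuclideanSpace ℝ (Fin (n + 1)) :=
  WithLp.toLp 2 (Fin.snoc q.1.ofLp q.2 : Fin (n + 1) → ℝ)

noncomputable def snocZero (n : ℕ) (xb : EuclideanSpace ℝ (Fin n)) :
    EuclideanSpace ℝ (Fin (n + 1)) := WithLp.toLp 2 (Fin.snoc xb.ofLp 0 : Fin (n + 1) → ℝ)

noncomputable def snocEquiv (n : ℕ) :
    (EuclideanSpace ℝ (Fin n) × ℝ) ≃ᵐ EuclideanSpace ℝ (Fin (n + 1)) :=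
  ((((MeasurableEquiv.toLp 2 (Fin n → ℝ)).symm).prodCongr (MeasurableEquiv.refl ℝ)).trans
    MeasurableEquiv.prodComm).trans
    (((MeasurableEquiv.piFinSuccAbove (fun _ : Fin (n + 1) => ℝ) (Fin.last n)).symm).trans
      ((MeasurableEquiv.toLp 2 (Fin (n + 1) → ℝ)).symm).symm)

lemma snocEquiv_coe (n : ℕ) : ⇑(snocEquiv n) = snocMap n := by
  funext q
  simp only [snocEquiv, MeasurableEquiv.trans_apply]
  rw [show (MeasurableEquiv.prodComm
      ((((MeasurableEquiv.toLp 2 (Fin n → ℝ)).symm).prodCongr (MeasurableEquiv.refl ℝ)) q))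
      = (q.2, ((MeasurableEquiv.toLp 2 (Fin n → ℝ)).symm) q.1) from rfl]
  rw [show ((MeasurableEquiv.piFinSuccAbove (fun _ : Fin (n + 1) => ℝ) (Fin.last n)).symm
      (q.2, ((MeasurableEquiv.toLp 2 (Fin n → ℝ)).symm) q.1))
      = Fin.insertNth (Fin.last n) q.2 (((MeasurableEquiv.toLp 2 (Fin n → ℝ)).symm) q.1) from rfl]
  rw [Fin.insertNth_last']
  rfl

lemma snocEquiv_measurePreserving (n : ℕ) :
    MeasurePreserving (snocMap n) volume volume := by
  rw [← snocEquiv_coe]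
  have h1 : MeasurePreserving
      (Prod.map (⇑((MeasurableEquiv.toLp 2 (Fin n → ℝ)).symm)) (id : ℝ → ℝ)) volume volume :=
    (EuclideanSpace.volume_preserving_symm_measurableEquiv_toLp (Fin n)).prod (MeasurePreserving.id _)
  have h2 : MeasurePreserving (Prod.swap : ((Fin n → ℝ) × ℝ) → ℝ × (Fin n → ℝ))
      volume volume := Measure.measurePreserving_swap
  have h3 : MeasurePreserving
      (⇑(MeasurableEquiv.piFinSuccAbove (fun _ : Fin (n + 1) => ℝ) (Fin.last n)).symm)
      volume volume :=
    (volume_preserving_piFinSuccAbove (fun _ : Fin (n + 1) => ℝ) (Fin.last n)).symm _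
  have h4 : MeasurePreserving (⇑((MeasurableEquiv.toLp 2 (Fin (n + 1) → ℝ)).symm).symm)
      volume volume :=
    (EuclideanSpace.volume_preserving_symm_measurableEquiv_toLp (Fin (n + 1))).symm _
  exact h4.comp (h3.comp (h2.comp h1))

lemma snocMap_continuous (n : ℕ) : Continuous (snocMap n) := by
  have : Continuous fun q : EuclideanSpace ℝ (Fin n) × ℝ =>
      (fun i => (Fin.snoc q.1.ofLp q.2 : Fin (n + 1) → ℝ) i : Fin (n + 1) → ℝ) := by
    apply continuous_pi
    intro i
    induction i using Fin.lastCases with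
    | last =>
      simp only [Fin.snoc_last]
      exact continuous_snd
    | cast j =>
      simp only [Fin.snoc_castSucc]
      exact (continuous_apply j).comp
        ((PiLp.continuous_ofLp 2 (fun _ : Fin n => ℝ)).comp continuous_fst)
  exact (PiLp.continuous_toLp 2 (fun _ : Fin (n + 1) => ℝ)).comp this

lemma snoc_proj (xb : EuclideanSpace ℝ (Fin n)) (t : ℝ) :
    (WithLp.toLp 2 (fun i : Fin n => (WithLp.toLp 2 (Fin.snoc xb.ofLp t : Fin (n + 1) → ℝ)
      : EuclideanSpace ℝ (Fin (n + 1))) i.castSucc) : EuclideanSpace ℝ (Fin n)) = xb := by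
  ext i
  simp [Fin.snoc_castSucc]

lemma snoc_line (xb : EuclideanSpace ℝ (Fin n)) :
    (fun t : ℝ => snocMap n (xb, t))
      = fun t : ℝ => snocZero n xb + t • EuclideanSpace.single (Fin.last n) (1 : ℝ) := by
  funext t
  ext i
  induction i using Fin.lastCases with
  | last => simp [snocZero, snocMap, Fin.snoc_last, EuclideanSpace.single_apply, PiLp.add_apply,
      PiLp.smul_apply]
  | cast j => simp [snocZero, snocMap, Fin.snoc_castSucc, EuclideanSpace.single_apply,
      PiLp.add_apply, PiLp.smul_apply, (Fin.castSucc_lt_last j).ne]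

end Aux

/-- The Poincaré–Wirtinger inequality (*1) in a thin domain, with constant of order ε. -/
theorem thin_domain_poincare_wirtinger (n : ℕ) (hn : 1 ≤ n) (p : ℝ) (hp : 1 ≤ p)
    (Ω : Set (EuclideanSpace ℝ (Fin n))) (hΩopen : IsOpen Ω)
    (hΩbdd : Bornology.IsBounded Ω) :
    ∃ C > (0 : ℝ), ∀ ε ∈ Set.Ioc (0 : ℝ) 1,
      ∀ u : EuclideanSpace ℝ (Fin (n + 1)) → ℝ, ContDiff ℝ 1 u →
        (∃ B : ℝ, ∀ x ∈ thinDomain n Ω ε, |u x| ≤ B ∧ ‖fderiv ℝ u x‖ ≤ B) →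
        ∫ x in thinDomain n Ω ε,
            |u x - thinAverage n ε u (WithLp.toLp 2 (fun i : Fin n => x i.castSucc))| ^ p ≤
          C ^ p * ε ^ p * ∫ x in thinDomain n Ω ε,
            |fderiv ℝ u x (EuclideanSpace.single (Fin.last n) (1 : ℝ))| ^ p := by
  refine ⟨2, by norm_num, ?_⟩
  rintro ε ⟨hε, hε1⟩ u hu -
  have hple : (0 : ℝ) ≤ p := by linarith
  set v : EuclideanSpace ℝ (Fin (n + 1)) → ℝ :=
    fun x => (fderiv ℝ u x) (EuclideanSpace.single (Fin.last n) (1 : ℝ)) with hv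
  have hvc : Continuous v := (hu.continuous_fderiv one_ne_zero).clm_apply continuous_const
  have hMc : Continuous (thinAverage n ε u) := by
    have : Continuous fun xb : EuclideanSpace ℝ (Fin n) =>
        ∫ ζ in (-ε)..ε, u (WithLp.toLp 2 (Fin.snoc xb.ofLp ζ : Fin (n + 1) → ℝ) : EuclideanSpace ℝ (Fin (n + 1))) := by
      apply intervalIntegral.continuous_parametric_intervalIntegral_of_continuous'
      exact hu.continuous.comp (snocMap_continuous n)
    exact continuous_const.mul this
  have himg : thinDomain n Ω ε = snocMap n '' (Ω ×ˢ Ioo (-ε) ε) := by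
    ext x
    constructor
    · rintro ⟨hx1, hx2⟩
      refine ⟨((WithLp.toLp 2 (fun i : Fin n => x i.castSucc) : EuclideanSpace ℝ (Fin n)), x (Fin.last n)),
        ⟨hx1, ?_⟩, ?_⟩
      · rw [Set.mem_Ioo]
        exact ⟨neg_lt_of_abs_lt hx2, lt_of_abs_lt hx2⟩
      · show (WithLp.toLp 2 (Fin.snoc _ _ : Fin (n + 1) → ℝ) : EuclideanSpace ℝ (Fin (n + 1))) = x
        ext i
        induction i using Fin.lastCases with
        | last => simp [Fin.snoc_last]
        | cast j => simp [Fin.snoc_castSucc]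
    · rintro ⟨⟨xb, t⟩, ⟨h1, h2⟩, rfl⟩
      constructor
      · show (WithLp.toLp 2 (fun i : Fin n => (snocMap n (xb, t)) i.castSucc)
          : EuclideanSpace ℝ (Fin n)) ∈ Ω
        rw [show snocMap n (xb, t) = (WithLp.toLp 2 (Fin.snoc xb.ofLp t : Fin (n + 1) → ℝ) : EuclideanSpace ℝ (Fin (n + 1))) from rfl,
          snoc_proj]
        exact h1
      · show |(Fin.snoc xb.ofLp t : Fin (n + 1) → ℝ) (Fin.last n)| < ε
        rw [Fin.snoc_last, abs_lt]
        exact ⟨h2.1, h2.2⟩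
  have hemb : MeasurableEmbedding (snocMap n) := by
    rw [← snocEquiv_coe]; exact (snocEquiv n).measurableEmbedding
  rw [himg,
    (snocEquiv_measurePreserving n).setIntegral_image_emb hemb _ _,
    (snocEquiv_measurePreserving n).setIntegral_image_emb hemb _ _]
  have hmeasΩIoo : MeasurableSet (Ω ×ˢ Ioo (-ε) ε) :=
    (hΩopen.measurableSet).prod measurableSet_Ioo
  rw [setIntegral_congr_fun hmeasΩIoo (g := fun q : EuclideanSpace ℝ (Fin n) × ℝ =>
      |u (snocMap n q) - thinAverage n ε u q.1| ^ p)
    (fun q _ => by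
      rw [show (WithLp.toLp 2 (fun i : Fin n => (snocMap n q) i.castSucc) : EuclideanSpace ℝ (Fin n))
        = q.1 from snoc_proj q.1 q.2]),
    setIntegral_congr_fun hmeasΩIoo (g := fun q : EuclideanSpace ℝ (Fin n) × ℝ =>
      |v (snocMap n q)| ^ p) (fun q _ => rfl)]
  obtain ⟨R, hR⟩ := (Metric.isBounded_iff_subset_closedBall (0 : EuclideanSpace ℝ (Fin n))).1 hΩbdd
  have hKcomp : IsCompact ((Metric.closedBall (0 : EuclideanSpace ℝ (Fin n)) R) ×ˢ Icc (-ε) ε) :=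
    (isCompact_closedBall _ _).prod isCompact_Icc
  have hsubK : Ω ×ˢ Ioo (-ε) ε ⊆
      (Metric.closedBall (0 : EuclideanSpace ℝ (Fin n)) R) ×ˢ Icc (-ε) ε :=
    Set.prod_mono hR Ioo_subset_Icc_self
  have hF₁c : Continuous fun q : EuclideanSpace ℝ (Fin n) × ℝ =>
      |u (snocMap n q) - thinAverage n ε u q.1| ^ p :=
    (((hu.continuous.comp (snocMap_continuous n)).sub (hMc.comp continuous_fst)).abs).rpow_const
      fun x => Or.inr hple
  have hF₂c : Continuous fun q : EuclideanSpace ℝ (Fin n) × ℝ => |v (snocMap n q)| ^ p :=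
    ((hvc.comp (snocMap_continuous n)).abs).rpow_const fun x => Or.inr hple
  have hF₁int : IntegrableOn (fun q : EuclideanSpace ℝ (Fin n) × ℝ =>
      |u (snocMap n q) - thinAverage n ε u q.1| ^ p) (Ω ×ˢ Ioo (-ε) ε) volume :=
    (hF₁c.continuousOn.integrableOn_compact hKcomp).mono_set hsubK
  have hF₂int : IntegrableOn (fun q : EuclideanSpace ℝ (Fin n) × ℝ =>
      |v (snocMap n q)| ^ p) (Ω ×ˢ Ioo (-ε) ε) volume :=
    (hF₂c.continuousOn.integrableOn_compact hKcomp).mono_set hsubK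
  rw [Measure.volume_eq_prod] at hF₁int hF₂int ⊢
  rw [setIntegral_prod _ hF₁int, setIntegral_prod _ hF₂int]
  have hkey : ∀ xb : EuclideanSpace ℝ (Fin n),
      (∫ t in Ioo (-ε) ε, |u (snocMap n (xb, t)) - thinAverage n ε u xb| ^ p)
        ≤ (2 * ε) ^ p * ∫ s in Ioo (-ε) ε, |v (snocMap n (xb, s))| ^ p := by
    intro xb
    have hd : ∀ s : ℝ, HasDerivAt (fun t => u (snocMap n (xb, t))) (v (snocMap n (xb, s))) s := by
      intro s
      have hline : HasDerivAt
          (fun t : ℝ => snocMap n (xb, t))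
          (EuclideanSpace.single (Fin.last n) (1 : ℝ)) s := by
        rw [snoc_line]
        simpa using ((hasDerivAt_id s).smul_const
          (EuclideanSpace.single (Fin.last n) (1 : ℝ))).const_add (snocZero n xb)
      exact ((hu.differentiable one_ne_zero) _).hasFDerivAt.comp_hasDerivAt s hline
    have hDc : Continuous fun s => v (snocMap n (xb, s)) :=
      (hvc.comp (snocMap_continuous n)).comp (continuous_const.prodMk continuous_id)
    simpa [thinAverage, snocMap] using key1d hε hp hd hDc
  have hRint : Integrable (fun xb => ∫ s in Ioo (-ε) ε, |v (snocMap n (xb, s))| ^ p)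
      (volume.restrict Ω) := by
    have h' : Integrable (fun q : EuclideanSpace ℝ (Fin n) × ℝ => |v (snocMap n q)| ^ p)
        ((volume.restrict Ω).prod (volume.restrict (Ioo (-ε) ε))) := by
      rw [Measure.prod_restrict]; exact hF₂int
    exact h'.integral_prod_left
  calc ∫ xb in Ω, ∫ t in Ioo (-ε) ε, |u (snocMap n (xb, t)) - thinAverage n ε u xb| ^ p
      ≤ ∫ xb in Ω, (2 * ε) ^ p * ∫ s in Ioo (-ε) ε, |v (snocMap n (xb, s))| ^ p := by
        apply integral_mono_of_nonneg
        · exact Filter.Eventually.of_forall fun xb =>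
            integral_nonneg fun t => Real.rpow_nonneg (abs_nonneg _) p
        · exact hRint.const_mul _
        · exact Filter.Eventually.of_forall hkey
    _ = (2 : ℝ) ^ p * ε ^ p * ∫ xb in Ω, ∫ s in Ioo (-ε) ε, |v (snocMap n (xb, s))| ^ p := by
        rw [integral_const_mul, ← Real.mul_rpow (by norm_num : (0:ℝ) ≤ 2) hε.le]
end
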